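/- Let L be a closed subspace of a Hilbert space E = F ⊕ ℂe (e a unit vector) and write the orthogonal projection [L] in block form [[a,b],[c,d]] with respect to this decomposition, with d ≠ 0. Then the orthogonal projection onto L ∩ F equals a − b d⁻¹ c (as an operator on F). -/

import Mathlib

open scoped ComplexInnerProductSpace

/-- Block formula for the projection onto `L ∩ F`, where `E = F ⊕ ℂe`, `F = (ℂe)ᗮ`.
`P` is the orthogonal projection onto `L`, `Q` the orthogonal projection onto `L ∩ F`,
`d = ⟪e, P e⟫ ≠ 0`. -/
theorem stmt6 {E : Type*} [NormedAddCommGroup E] [InnerProductSpace ℂ E] [CompleteSpace E]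
    (e : E) (he : ‖e‖ = 1) (P Q : E →L[ℂ] E)
    (hP : IsSelfAdjoint P) (hPi : P ∘L P = P)
    (hQ : IsSelfAdjoint Q) (hQi : Q ∘L Q = Q)
    (hQrange : LinearMap.range (Q : E →ₗ[ℂ] E) = LinearMap.range (P : E →ₗ[ℂ] E) ⊓ (ℂ ∙ e)ᗮ)
    (hd : ⟪e, P e⟫ ≠ 0) :
    ∀ v : E, ⟪e, v⟫ = 0 →
      Q v = (P v - ⟪e, P v⟫ • e)
        - ((⟪e, P e⟫)⁻¹ * ⟪e, P v⟫) • (P e - ⟪e, P e⟫ • e) := by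
  intro v hv
  have hPadj : ContinuousLinearMap.adjoint P = P := (ContinuousLinearMap.isSelfAdjoint_iff').mp hP
  have hQadj : ContinuousLinearMap.adjoint Q = Q := (ContinuousLinearMap.isSelfAdjoint_iff').mp hQ
  have hPinner : ∀ x y : E, ⟪P x, y⟫ = ⟪x, P y⟫ := fun x y => by
    conv_lhs => rw [← hPadj]
    exact ContinuousLinearMap.adjoint_inner_left P y x
  have hQinner : ∀ x y : E, ⟪Q x, y⟫ = ⟪x, Q y⟫ := fun x y => by
    conv_lhs => rw [← hQadj]
    exact ContinuousLinearMap.adjoint_inner_left Q y x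
  set c : ℂ := (⟪e, P e⟫)⁻¹ * ⟪e, P v⟫ with hc
  set w : E := P v - c • P e with hw
  have hcd : c * ⟪e, P e⟫ = ⟪e, P v⟫ := by
    rw [hc, mul_comm, ← mul_assoc, mul_inv_cancel₀ hd, one_mul]
  -- RHS equals w
  have hRHS : (P v - ⟪e, P v⟫ • e) - c • (P e - ⟪e, P e⟫ • e) = w := by
    rw [hw, smul_sub, smul_smul, hcd]
    abel
  rw [hRHS]
  -- w ∈ range Q
  have hwP : w ∈ LinearMap.range (P : E →ₗ[ℂ] E) := by
    refine ⟨v - c • e, ?_⟩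
    simp [hw, map_sub, map_smul]
  have hwe : ⟪e, w⟫ = 0 := by
    simp only [hw, inner_sub_right, inner_smul_right]
    rw [hc]
    field_simp
    ring
  have hwQ : w ∈ LinearMap.range (Q : E →ₗ[ℂ] E) := by
    rw [hQrange]
    exact ⟨hwP, Submodule.mem_orthogonal_singleton_iff_inner_right.mpr hwe⟩
  obtain ⟨y, hy⟩ := hwQ
  have hQw : Q w = w := by
    rw [← hy, ContinuousLinearMap.coe_coe, ← ContinuousLinearMap.comp_apply, hQi]
  -- Q (v - w) = 0
  have key : Q (v - w) = 0 := by
    set x : E := Q (v - w) with hx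
    have hxQ : x ∈ LinearMap.range (Q : E →ₗ[ℂ] E) := ⟨v - w, rfl⟩
    rw [hQrange] at hxQ
    obtain ⟨⟨z, hz⟩, hxe⟩ := hxQ
    have hxe' : ⟪e, x⟫ = 0 :=
      Submodule.mem_orthogonal_singleton_iff_inner_right.mp hxe
    have hPx : P x = x := by
      rw [← hz, ContinuousLinearMap.coe_coe, ← ContinuousLinearMap.comp_apply, hPi]
    have h1 : ⟪x, v - w⟫ = 0 := by
      have hxv : ⟪x, P v⟫ = ⟪x, v⟫ := by rw [← hPinner, hPx]
      have hxPe : ⟪x, P e⟫ = 0 := by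
        rw [← hPinner, hPx, ← inner_conj_symm, hxe', map_zero]
      simp only [hw, inner_sub_right, inner_smul_right, hxv, hxPe]
      ring
    have h2 : ⟪x, x⟫ = 0 := by
      calc ⟪x, x⟫ = ⟪Q (v - w), x⟫ := by rw [← hx]
        _ = ⟪v - w, Q x⟫ := hQinner _ _
        _ = ⟪v - w, Q (Q (v - w))⟫ := by rw [hx]
        _ = ⟪v - w, x⟫ := by
            rw [← ContinuousLinearMap.comp_apply, hQi]
        _ = 0 := by rw [← inner_conj_symm, h1, map_zero]
    exact inner_self_eq_zero.mp h2
  have : Q v = Q w + Q (v - w) := by rw [← map_add]; congr 1; abel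
  rw [this, key, add_zero, hQw]
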